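/- Let (S_k)_{k≥1} be a process such that S_k − Σ_{i=1}^k m_i is a sum of k independent standard Gaussians, where m_i ≥ 0 are deterministic. Let u_α(k) be a boundary such that for a standard Gaussian random walk W_k, P(∃k: W_k ≥ u_α(k)) ≤ α, and assume by symmetry P(∃k: W_k ≤ −u_β(k)) ≤ β. If there exists k* with Σ_{i=1}^{k*} m_i ≥ u_α(k*) + u_β(k*), then P(∃k: S_k ≥ u_α(k)) ≥ 1 − β. -/

import Mathlib

open MeasureTheory ProbabilityTheory
open scoped ENNReal NNReal BigOperators

lemma gaussian_Iic_pos (a : ℝ) : 0 < gaussianReal 0 1 (Set.Iic a) := by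
  rw [pos_iff_ne_zero]
  intro h
  have h2 : (volume : Measure ℝ) (Set.Iic a) = 0 :=
    gaussianReal_absolutelyContinuous' 0 one_ne_zero h
  simp [Real.volume_Iic] at h2

/-- If `S_k = Σ_{i≤k} (m_i + G_i)` with `G_i` i.i.d. standard Gaussians and deterministic
`m_i ≥ 0`, and the boundaries `u_α, u_β` satisfy the uniform crossing bounds for the
centered Gaussian random walk, then `Σ_{i≤k*} m_i ≥ u_α(k*) + u_β(k*)` for some `k*`
implies that the crossing probability (power) is at least `1 − β`. -/
theorem martingale_stouffer_power_sufficient {Ω : Type*} [MeasurableSpace Ω]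
    (P : Measure Ω) [IsProbabilityMeasure P]
    (m : ℕ → ℝ) (hm : ∀ i, 0 ≤ m i)
    (G : ℕ → Ω → ℝ)
    (hindep : iIndepFun G P)
    (hdist : ∀ i, Measure.map (G i) P = gaussianReal 0 1)
    (uα uβ : ℕ → ℝ) (α β : ℝ)
    (huα : P {ω | ∃ k ≥ 1, uα k ≤ ∑ i ∈ Finset.range k, G i ω} ≤ ENNReal.ofReal α)
    (huβ : P {ω | ∃ k ≥ 1, ∑ i ∈ Finset.range k, G i ω ≤ -uβ k} ≤ ENNReal.ofReal β)
    (hcross : ∃ k ≥ 1, uα k + uβ k ≤ ∑ i ∈ Finset.range k, m i) :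
    ENNReal.ofReal (1 - β)
      ≤ P {ω | ∃ k ≥ 1, uα k ≤ ∑ i ∈ Finset.range k, (m i + G i ω)} := by
  obtain ⟨k, hk1, hk⟩ := hcross
  set A := {ω | ∃ k ≥ 1, uα k ≤ ∑ i ∈ Finset.range k, (m i + G i ω)}
  set B := {ω | ∃ k ≥ 1, ∑ i ∈ Finset.range k, G i ω ≤ -uβ k}
  -- every ω is in A or B
  have hcover : (Set.univ : Set Ω) ⊆ A ∪ B := by
    intro ω _
    by_cases hA : ω ∈ A
    · exact Or.inl hA
    · right
      refine ⟨k, hk1, ?_⟩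
      have hnot : ¬ (uα k ≤ ∑ i ∈ Finset.range k, (m i + G i ω)) := fun h => hA ⟨k, hk1, h⟩
      push_neg at hnot
      rw [Finset.sum_add_distrib] at hnot
      linarith
  have hPB_pos : 0 < P B := by
    -- B contains the intersection of events {G i ≤ c/k}
    set c : ℝ := -uβ k
    have hGmeas : ∀ i, AEMeasurable (G i) P := by
      intro i
      by_contra h
      have := Measure.map_of_not_aemeasurable (μ := P) h
      rw [hdist i] at this
      have : (gaussianReal 0 1) Set.univ = 0 := by rw [this]; rfl
      simp at this
    have hsub : (⋂ i ∈ Finset.range k, G i ⁻¹' Set.Iic (c / k)) ⊆ B := by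
      intro ω hω
      refine ⟨k, hk1, ?_⟩
      have hsum : ∑ i ∈ Finset.range k, G i ω ≤ ∑ i ∈ Finset.range k, (c / k) := by
        apply Finset.sum_le_sum
        intro i hi
        exact Set.mem_iInter₂.mp hω i hi
      have hkpos : (0:ℝ) < k := by exact_mod_cast hk1
      rw [Finset.sum_const, Finset.card_range, nsmul_eq_mul] at hsum
      rw [mul_div_cancel₀ _ hkpos.ne'] at hsum
      exact hsum
    refine lt_of_lt_of_le ?_ (measure_mono hsub)
    have hprod := hindep.meas_biInter (S := Finset.range k)
      (s := fun i => G i ⁻¹' Set.Iic (c / k))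
      (fun i _ => ⟨Set.Iic (c / k), measurableSet_Iic, rfl⟩)
    rw [hprod]
    apply CanonicallyOrderedAdd.prod_pos.mpr
    intro i _
    have : P (G i ⁻¹' Set.Iic (c / k)) = gaussianReal 0 1 (Set.Iic (c / k)) := by
      rw [← hdist i, Measure.map_apply_of_aemeasurable (hGmeas i) measurableSet_Iic]
    rw [this]
    exact gaussian_Iic_pos _
  by_cases hβ : 0 ≤ β
  · have h1 : (1 : ℝ≥0∞) ≤ P A + P B := by
      calc (1 : ℝ≥0∞) = P Set.univ := (measure_univ).symm
        _ ≤ P (A ∪ B) := measure_mono hcover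
        _ ≤ P A + P B := measure_union_le A B
    have h2 : (1 : ℝ≥0∞) ≤ P A + ENNReal.ofReal β := h1.trans (add_le_add_right huβ _)
    have h3 : (1 : ℝ≥0∞) - ENNReal.ofReal β ≤ P A := tsub_le_iff_right.mpr h2
    calc ENNReal.ofReal (1 - β) = ENNReal.ofReal 1 - ENNReal.ofReal β :=
          ENNReal.ofReal_sub _ hβ
      _ = 1 - ENNReal.ofReal β := by rw [ENNReal.ofReal_one]
      _ ≤ P A := h3
  · exfalso
    push_neg at hβ
    have : P B = 0 := le_antisymm (huβ.trans (by simp [ENNReal.ofReal_eq_zero.mpr hβ.le])) zero_le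
    exact hPB_pos.ne' this
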